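/- Let ε ∈ ℚ ∩ (0,1). If C₁ and C₂ are two distinct finite multisets of real numbers, each element of the form (1+ε)^i for an integer i with ε ≤ (1+ε)^i ≤ 1, and the sum of each multiset lies in [ε, 1], then the sums of C₁ and C₂ are different. -/

import Mathlib

lemma arith_aux (P Q : ℤ) (hQ : 2 ≤ Q) (hcop : IsCoprime P Q) :
    ∀ (N : ℕ) (g : ℕ → ℤ), (∀ j, |g j| < Q) →
    (∑ j ∈ Finset.range N, g j * Q ^ j * P ^ (N - 1 - j)) = 0 →
    ∀ j < N, g j = 0 := by
  intro N
  induction N with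
  | zero => intro g _ _ j hj; omega
  | succ N ih =>
    intro g hb hsum j hj
    rw [Finset.sum_range_succ'] at hsum
    have hQ0 : Q ≠ 0 := by omega
    have hsum' : (∑ i ∈ Finset.range N, g (i + 1) * Q ^ (i + 1) * P ^ (N + 1 - 1 - (i + 1)))
        + g 0 * P ^ N = 0 := by
      convert hsum using 3
      · norm_num
      · norm_num
    have hdvd : Q ∣ g 0 * P ^ N := by
      have : Q ∣ ∑ i ∈ Finset.range N, g (i + 1) * Q ^ (i + 1) * P ^ (N + 1 - 1 - (i + 1)) := by
        apply Finset.dvd_sum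
        intro i _
        exact Dvd.dvd.mul_right (Dvd.dvd.mul_left (dvd_pow_self Q (Nat.succ_ne_zero i)) _) _
      have heq : g 0 * P ^ N = -(∑ i ∈ Finset.range N, g (i + 1) * Q ^ (i + 1) * P ^ (N + 1 - 1 - (i + 1))) := by linarith
      rw [heq]
      exact dvd_neg.mpr this
    have hg0 : g 0 = 0 := by
      have hd : Q ∣ g 0 := (hcop.pow_left.symm).dvd_of_dvd_mul_right hdvd
      exact Int.eq_zero_of_abs_lt_dvd hd (hb 0)
    rcases Nat.eq_zero_or_pos j with rfl | hjpos
    · exact hg0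
    obtain ⟨k, rfl⟩ : ∃ k, j = k + 1 := ⟨j - 1, by omega⟩
    have hrest : ∑ i ∈ Finset.range N, g (i + 1) * Q ^ i * P ^ (N - 1 - i) = 0 := by
      have h2 : Q * ∑ i ∈ Finset.range N, g (i + 1) * Q ^ i * P ^ (N - 1 - i) = 0 := by
        rw [Finset.mul_sum]
        rw [hg0] at hsum'
        simp only [zero_mul, add_zero] at hsum'
        rw [← hsum']
        apply Finset.sum_congr rfl
        intro i hi
        have : N + 1 - 1 - (i + 1) = N - 1 - i := by omega
        rw [this]
        ring
      exact (mul_eq_zero.mp h2).resolve_left hQ0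
    exact ih (fun i => g (i + 1)) (fun i => hb (i + 1)) hrest k (by omega)

lemma arith_rat (P Q : ℤ) (hP : 0 < P) (hQ : 2 ≤ Q) (hcop : IsCoprime P Q)
    (N : ℕ) (g : ℕ → ℤ) (hb : ∀ j, |g j| < Q)
    (hsum : ∑ j ∈ Finset.range N, (g j : ℚ) * ((Q : ℚ) / (P : ℚ)) ^ j = 0) :
    ∀ j < N, g j = 0 := by
  apply arith_aux P Q hQ hcop N g hb
  have hP0 : (P : ℚ) ≠ 0 := by positivity
  have h : ((∑ j ∈ Finset.range N, g j * Q ^ j * P ^ (N - 1 - j) : ℤ) : ℚ)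
      = (P:ℚ) ^ (N-1) * ∑ j ∈ Finset.range N, (g j : ℚ) * ((Q:ℚ)/(P:ℚ))^j := by
    push_cast
    rw [Finset.mul_sum]
    refine Finset.sum_congr rfl ?_
    intro j hj
    have hj' : j ≤ N - 1 := by
      simp only [Finset.mem_range] at hj; omega
    have hsplit : (P:ℚ) ^ (N-1) = (P:ℚ)^j * (P:ℚ)^(N-1-j) := by
      rw [← pow_add]; congr 1; omega
    rw [hsplit, div_pow]
    field_simp
  rw [hsum, mul_zero] at h
  exact_mod_cast h

lemma count_lt (R S : ℤ) (hR : 1 ≤ R) (hS : 2 ≤ S) (hcop : IsCoprime (R + S) S)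
    (j : ℕ) (m : ℤ) (h1 : m * S ^ j ≤ (R + S) ^ j)
    (h2 : R * (R + S) ^ j ≤ S ^ (j + 1)) : m < S := by
  by_contra hcon
  push_neg at hcon
  have hSj : (0:ℤ) < S ^ j := by positivity
  have hPj : (0:ℤ) < (R + S) ^ j := by positivity
  have hA : S ^ (j + 1) ≤ (R + S) ^ j := by
    calc S ^ (j+1) = S * S ^ j := by ring
    _ ≤ m * S ^ j := by nlinarith
    _ ≤ (R + S) ^ j := h1
  have hR1 : R = 1 := by nlinarith
  have hEq : (R + S) ^ j = S ^ (j + 1) := by nlinarith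
  rcases Nat.eq_zero_or_pos j with rfl | hj
  · simp at hEq; omega
  · have hdvd : S ∣ (R + S) ^ j := by
      rw [hEq]
      exact dvd_pow_self S (by omega)
    have : S ∣ 1 := (hcop.pow_left.symm).dvd_of_dvd_mul_right (by simpa using hdvd)
    have := Int.le_of_dvd one_pos this
    omega

theorem stmt9 (ε : ℚ) (hε0 : 0 < ε) (hε1 : ε < 1) (C₁ C₂ : Multiset ℝ)
    (h1 : ∀ x ∈ C₁, ∃ i : ℤ, x = (1 + (ε : ℝ))^i ∧ (ε : ℝ) ≤ x ∧ x ≤ 1)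
    (h2 : ∀ x ∈ C₂, ∃ i : ℤ, x = (1 + (ε : ℝ))^i ∧ (ε : ℝ) ≤ x ∧ x ≤ 1)
    (hs1l : (ε : ℝ) ≤ C₁.sum) (hs1u : C₁.sum ≤ 1)
    (hs2l : (ε : ℝ) ≤ C₂.sum) (hs2u : C₂.sum ≤ 1)
    (hne : C₁ ≠ C₂) : C₁.sum ≠ C₂.sum := by
  intro hsum
  apply hne
  -- rational facts
  have hnum : 1 ≤ ε.num := Rat.num_pos.mpr hε0
  have hεden : ε * (ε.den : ℚ) = (ε.num : ℚ) := Rat.mul_den_eq_num ε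
  have hdenpos : (0:ℚ) < (ε.den:ℚ) := by positivity
  have hlt : ε.num < (ε.den : ℤ) := by
    have h : (ε.num : ℚ) < (ε.den : ℚ) := by
      calc (ε.num:ℚ) = ε * ε.den := hεden.symm
      _ < 1 * ε.den := by exact mul_lt_mul_of_pos_right hε1 hdenpos
      _ = ε.den := one_mul _
    exact_mod_cast h
  have hden2 : 2 ≤ (ε.den : ℤ) := by omega
  have hcopRS : IsCoprime ε.num (ε.den : ℤ) := by
    rw [Int.isCoprime_iff_gcd_eq_one]
    exact_mod_cast ε.reduced
  have hcop : IsCoprime (ε.num + (ε.den:ℤ)) (ε.den : ℤ) := by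
    simpa using hcopRS.add_mul_left_left 1
  set u : ℚ := (ε.den : ℚ) / ((ε.num : ℚ) + (ε.den : ℚ)) with hu
  have hPQ0 : (0:ℚ) < ((ε.num : ℚ) + (ε.den : ℚ)) := by positivity
  have hu' : u = (1 + ε)⁻¹ := by
    have h1' : (1 + ε) * u = 1 := by
      rw [hu, mul_div_assoc']
      rw [div_eq_one_iff_eq (by linarith)]
      nlinarith [hεden]
    field_simp [hu] at h1' ⊢
    linarith [h1']
  -- real facts
  have hε0R : (0:ℝ) < (ε:ℝ) := by exact_mod_cast hε0
  have hε1R : ((ε:ℝ)) < 1 := by exact_mod_cast hε1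
  have hx1 : (1:ℝ) < 1 + (ε:ℝ) := by linarith
  set b : ℝ := (1 + (ε:ℝ))⁻¹ with hbdef
  have hb0 : 0 < b := by rw [hbdef]; positivity
  have hb1 : b < 1 := by
    rw [hbdef, inv_lt_one_iff₀]; right; exact hx1
  have hbu : b = ((u : ℚ) : ℝ) := by
    rw [hu']; push_cast; rfl
  -- every element has the form b ^ j
  have hform : ∀ (C : Multiset ℝ),
      (∀ x ∈ C, ∃ i : ℤ, x = (1 + (ε : ℝ))^i ∧ (ε : ℝ) ≤ x ∧ x ≤ 1) →
      ∀ x ∈ C, ∃ j : ℕ, x = b ^ j := by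
    intro C hC x hx
    obtain ⟨i, hxi, hεx, hx1'⟩ := hC x hx
    have hi0 : i ≤ 0 := by
      by_contra hcon
      push_neg at hcon
      have : (1 + (ε:ℝ))^(0:ℤ) < (1 + (ε:ℝ))^i := zpow_lt_zpow_right₀ hx1 hcon
      rw [zpow_zero] at this
      rw [← hxi] at this
      linarith
    refine ⟨(-i).toNat, ?_⟩
    rw [hxi, hbdef, inv_pow, ← zpow_natCast, Int.toNat_of_nonneg (by omega), ← zpow_neg,
      neg_neg]
  -- uniform exponent bound
  obtain ⟨N, hNgt⟩ := exists_nat_gt (((ε:ℝ))⁻¹ * ((ε:ℝ))⁻¹)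
  have hN : ∀ j : ℕ, (ε:ℝ) ≤ b ^ j → j < N := by
    intro j hj
    have hbern : 1 + (j:ℝ) * (ε:ℝ) ≤ (1 + (ε:ℝ)) ^ j := by
      exact one_add_mul_le_pow (by linarith) j
    have hpow : (ε:ℝ) * (1 + (ε:ℝ)) ^ j ≤ 1 := by
      have hbpos : (0:ℝ) < (1 + (ε:ℝ)) ^ j := by positivity
      have : (ε:ℝ) ≤ ((1 + (ε:ℝ)) ^ j)⁻¹ := by rwa [hbdef, inv_pow] at hj
      calc (ε:ℝ) * (1 + (ε:ℝ)) ^ j ≤ ((1 + (ε:ℝ)) ^ j)⁻¹ * (1 + (ε:ℝ)) ^ j :=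
        mul_le_mul_of_nonneg_right this (le_of_lt hbpos)
      _ = 1 := inv_mul_cancel₀ (ne_of_gt hbpos)
    have hjle : (j:ℝ) * (ε:ℝ) * (ε:ℝ) ≤ 1 := by nlinarith
    have h1' : (1:ℝ) < (N:ℝ) * ((ε:ℝ) * (ε:ℝ)) := by
      have h2' := mul_lt_mul_of_pos_right hNgt (show (0:ℝ) < (ε:ℝ)*(ε:ℝ) by positivity)
      rwa [show ((ε:ℝ)⁻¹ * (ε:ℝ)⁻¹) * ((ε:ℝ)*(ε:ℝ)) = 1 by field_simp] at h2'
    have hjN : (j:ℝ) < (N:ℝ) := by nlinarith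
    exact_mod_cast hjN
  -- elements have the form b ^ j with j < N
  have hformN : ∀ (C : Multiset ℝ),
      (∀ x ∈ C, ∃ i : ℤ, x = (1 + (ε : ℝ))^i ∧ (ε : ℝ) ≤ x ∧ x ≤ 1) →
      ∀ x ∈ C, ∃ j, j < N ∧ x = b ^ j := by
    intro C hC x hx
    obtain ⟨j, rfl⟩ := hform C hC x hx
    obtain ⟨i, hxi, hεx, hx1'⟩ := hC _ hx
    exact ⟨j, hN j hεx, rfl⟩
  have hC₁N := hformN C₁ h1
  have hC₂N := hformN C₂ h2
  -- count • a ≤ sum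
  have count_le_sum : ∀ (C : Multiset ℝ), (∀ x ∈ C, (0:ℝ) ≤ x) → ∀ a : ℝ, 0 ≤ a →
      (C.count a : ℝ) * a ≤ C.sum := by
    intro C hC a ha
    have hfil : (C.filter (· = a)).sum = (C.count a : ℝ) * a := by
      have : C.filter (· = a) = Multiset.replicate (C.count a) a := by
        rw [Multiset.filter_eq']
      rw [this, Multiset.sum_replicate, nsmul_eq_mul]
    have hsplit := Multiset.sum_filter_add_sum_filter_not (p := (· = a)) (s := C)
    rw [← hsplit, hfil]
    have : (0:ℝ) ≤ (C.filter (fun x => ¬ x = a)).sum := by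
      apply Multiset.sum_nonneg
      intro x hx
      exact hC x (Multiset.mem_of_mem_filter hx)
    linarith
  -- sum representation
  have hinj : Set.InjOn (fun j : ℕ => b ^ j) (Finset.range N) := fun a _ c _ h =>
    (pow_right_strictAnti₀ hb0 hb1).injective h
  have sumrep : ∀ C : Multiset ℝ, (∀ x ∈ C, ∃ j, j < N ∧ x = b ^ j) →
      C.sum = ∑ j ∈ Finset.range N, (C.count (b ^ j) : ℝ) * b ^ j := by
    intro C hC
    have hsub : C.toFinset ⊆ (Finset.range N).image (fun j => b ^ j) := by
      intro a ha
      rw [Multiset.mem_toFinset] at ha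
      obtain ⟨j, hj, rfl⟩ := hC a ha
      exact Finset.mem_image.mpr ⟨j, Finset.mem_range.mpr hj, rfl⟩
    calc C.sum = (C.map id).sum := by rw [Multiset.map_id]
    _ = ∑ a ∈ C.toFinset, C.count a • id a := Finset.sum_multiset_map_count C id
    _ = ∑ a ∈ (Finset.range N).image (fun j => b ^ j), C.count a • id a := by
      apply Finset.sum_subset hsub
      intro a _ ha
      rw [Multiset.count_eq_zero_of_notMem (by rwa [← Multiset.mem_toFinset])]
      simp
    _ = ∑ j ∈ Finset.range N, C.count (b ^ j) • id (b ^ j) := Finset.sum_image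
      (fun a ha c hc h => hinj ha hc h)
    _ = ∑ j ∈ Finset.range N, (C.count (b ^ j) : ℝ) * b ^ j := by
      simp [nsmul_eq_mul]
  -- count bound
  have hbq : ∀ j : ℕ, b ^ j = (((u ^ j : ℚ)) : ℝ) := by
    intro j; rw [hbu]; push_cast; ring
  have hcount : ∀ (C : Multiset ℝ),
      (∀ x ∈ C, ∃ i : ℤ, x = (1 + (ε : ℝ))^i ∧ (ε : ℝ) ≤ x ∧ x ≤ 1) →
      C.sum ≤ 1 → ∀ j : ℕ, (C.count (b ^ j) : ℤ) < (ε.den : ℤ) := by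
    intro C hC hCu j
    by_cases hmem : b ^ j ∈ C
    · obtain ⟨i, hxi, hεx, hx1'⟩ := hC _ hmem
      have hnonneg : ∀ x ∈ C, (0:ℝ) ≤ x := by
        intro x hx
        obtain ⟨i, _, hεx', _⟩ := hC x hx
        linarith
      have hmb : (C.count (b ^ j) : ℝ) * b ^ j ≤ 1 :=
        le_trans (count_le_sum C hnonneg (b ^ j) (by positivity)) hCu
      set m : ℕ := C.count (b ^ j) with hm
      rw [hbq j] at hmb hεx
      have hmbQ : (m : ℚ) * u ^ j ≤ 1 := by exact_mod_cast hmb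
      have hεxQ : ε ≤ u ^ j := by exact_mod_cast hεx
      have hPQpow : (0:ℚ) < ((ε.num:ℚ) + (ε.den:ℚ)) ^ j := by positivity
      have h1' : (m : ℤ) * (ε.den : ℤ) ^ j ≤ (ε.num + (ε.den:ℤ)) ^ j := by
        have hq1 : (m : ℚ) * (ε.den : ℚ) ^ j ≤ ((ε.num:ℚ) + (ε.den:ℚ)) ^ j := by
          rw [hu, div_pow, ← mul_div_assoc, div_le_one hPQpow] at hmbQ
          linarith
        exact_mod_cast hq1
      have h2' : ε.num * (ε.num + (ε.den:ℤ)) ^ j ≤ (ε.den : ℤ) ^ (j + 1) := by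
        have hq : (ε.num : ℚ) * ((ε.num:ℚ) + (ε.den:ℚ)) ^ j ≤ (ε.den : ℚ) ^ (j+1) := by
          have hεeq : ε = (ε.num : ℚ) / (ε.den : ℚ) := (Rat.num_div_den ε).symm
          rw [hεeq, hu, div_pow, div_le_div_iff₀ hdenpos hPQpow] at hεxQ
          calc (ε.num : ℚ) * ((ε.num:ℚ) + (ε.den:ℚ)) ^ j ≤ (ε.den:ℚ) ^ j * (ε.den:ℚ) := hεxQ
          _ = (ε.den : ℚ) ^ (j+1) := by ring
        exact_mod_cast hq
      exact count_lt ε.num (ε.den:ℤ) hnum hden2 hcop j (m : ℤ) h1' h2'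
    · rw [Multiset.count_eq_zero_of_notMem hmem]
      omega
  have hc1 := hcount C₁ h1 hs1u
  have hc2 := hcount C₂ h2 hs2u
  -- the difference function
  set g : ℕ → ℤ := fun j => (C₁.count (b ^ j) : ℤ) - (C₂.count (b ^ j) : ℤ) with hg
  have hgb : ∀ j, |g j| < (ε.den : ℤ) := by
    intro j
    have := hc1 j
    have := hc2 j
    have : (0:ℤ) ≤ (C₁.count (b ^ j) : ℤ) := by positivity
    have : (0:ℤ) ≤ (C₂.count (b ^ j) : ℤ) := by positivity
    rw [hg, abs_lt]
    constructor <;> simp only <;> omega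
  -- the rational equation
  have hsumQ : ∑ j ∈ Finset.range N, (g j : ℚ) * u ^ j = 0 := by
    have key : ((∑ j ∈ Finset.range N, (g j : ℚ) * u ^ j : ℚ) : ℝ) = 0 := by
      simp only [hg]
      push_cast
      have : ∀ j ∈ Finset.range N,
          ((C₁.count (b ^ j) : ℝ) - (C₂.count (b ^ j) : ℝ)) * ((u:ℝ)) ^ j
          = (C₁.count (b ^ j) : ℝ) * b ^ j - (C₂.count (b ^ j) : ℝ) * b ^ j := by
        intro j _
        rw [hbu]
        ring
      rw [Finset.sum_congr rfl this, Finset.sum_sub_distrib,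
        ← sumrep C₁ hC₁N, ← sumrep C₂ hC₂N, hsum, sub_self]
    exact_mod_cast key
  -- conclude g = 0 below N
  have hg0 : ∀ j < N, g j = 0 := by
    apply arith_rat (ε.num + (ε.den:ℤ)) (ε.den:ℤ) (by omega) hden2 hcop N g hgb
    have hgoal : ∑ j ∈ Finset.range N,
        (g j : ℚ) * ((((ε.den:ℤ):ℚ)) / (((ε.num + (ε.den:ℤ) : ℤ)):ℚ)) ^ j
        = ∑ j ∈ Finset.range N, (g j : ℚ) * u ^ j := by
      apply Finset.sum_congr rfl
      intro j _
      congr 2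
      rw [hu]
      push_cast
      ring
    rw [hgoal]
    exact hsumQ
  -- conclude C₁ = C₂
  ext a
  by_cases ha1 : a ∈ C₁
  · obtain ⟨j, hj, rfl⟩ := hC₁N a ha1
    have := hg0 j hj
    rw [hg] at this
    simp only at this
    omega
  · by_cases ha2 : a ∈ C₂
    · obtain ⟨j, hj, rfl⟩ := hC₂N a ha2
      have := hg0 j hj
      rw [hg] at this
      simp only at this
      omega
    · rw [Multiset.count_eq_zero_of_notMem ha1, Multiset.count_eq_zero_of_notMem ha2]
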